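/- Let d ≥ 3 and n > d, and for 2 ≤ k ≤ d set r_k = ⌊ n^(d−1) / (n−1)^(2^k − k − 1) ⌋. Then every d-dimensional latin hypercube Q of order n contains at least (d+1)·n^(2d) − (d−1)·(n^(2d−1) + n^d) − d·n^(d+1) + n·Σ_{k=2}^{d} (d choose k)·(n−d)^(2^k − 1)·r_k·(r_k − 1) cuboctahedra. -/

import Mathlib

/-- A `d`-dimensional latin hypercube of order `n`: in each line (each coordinate varies,
the others are fixed) all symbols are distinct. -/
def IsLatinHypercube {d n : ℕ} (Q : (Fin d → Fin n) → Fin n) : Prop :=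
  ∀ (i : Fin d) (x : Fin d → Fin n),
    Function.Bijective (fun v : Fin n => Q (Function.update x i v))

/-- `(A, B)` is a cuboctahedron of the hypercube `Q`: the two (possibly degenerate)
subcubes of order 2 determined by the pairs `A i` and `B i` carry the same symbols. -/
def IsCuboct {d n : ℕ} (Q : (Fin d → Fin n) → Fin n)
    (A B : Fin d → Fin n × Fin n) : Prop :=
  ∀ j : Fin d → Fin 2,
    Q (fun i => if j i = 0 then (A i).1 else (A i).2) =
    Q (fun i => if j i = 0 then (B i).1 else (B i).2)

/-- The number of cuboctahedra of the hypercube `Q` (ordered pairs `(A, B)`). -/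
noncomputable def cuboctCount {d n : ℕ} (Q : (Fin d → Fin n) → Fin n) : ℕ :=
  Set.ncard {p : (Fin d → Fin n × Fin n) × (Fin d → Fin n × Fin n) |
    IsCuboct Q p.1 p.2}



section
variable {α β : Type*} [Fintype α] [DecidableEq α] [Fintype β] [DecidableEq β]

set_option linter.unusedSectionVars false in
lemma card_pairs_eq_sum_sq (f : α → β) :
    (Finset.univ.filter fun p : α × α => f p.1 = f p.2).card
      = ∑ v : β, (Finset.univ.filter fun a => f a = v).card ^ 2 := by
  rw [Finset.card_eq_sum_card_fiberwise
    (f := fun p : α × α => f p.1) (t := Finset.univ) (fun x _ => Finset.mem_univ _)]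
  refine Finset.sum_congr rfl fun v _ => ?_
  rw [sq, ← Finset.card_product]
  congr 1
  ext ⟨a, b⟩
  simp only [Finset.mem_filter, Finset.mem_product, Finset.mem_univ, true_and,
    Finset.filter_filter]
  constructor
  · rintro ⟨h1, h2⟩; exact ⟨h2, h1 ▸ h2⟩
  · rintro ⟨h1, h2⟩; exact ⟨h1.trans h2.symm, h1⟩

set_option linter.unusedSectionVars false in
lemma sum_sq_le_sq_sum_nat {s : Finset α} (f : α → ℕ) :
    ∑ i ∈ s, f i ^ 2 ≤ (∑ i ∈ s, f i) ^ 2 := by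
  rw [sq]
  calc ∑ i ∈ s, f i ^ 2 ≤ ∑ i ∈ s, f i * ∑ j ∈ s, f j := by
        refine Finset.sum_le_sum fun i hi => ?_
        rw [sq]
        exact Nat.mul_le_mul_left _ (Finset.single_le_sum (fun _ _ => Nat.zero_le _) hi)
    _ = (∑ i ∈ s, f i) * ∑ j ∈ s, f j := by rw [← Finset.sum_mul]

lemma sum_card_powerset_eq {d : ℕ} (f : ℕ → ℕ) :
    ∑ T : Finset (Fin d), f T.card = ∑ k ∈ Finset.range (d + 1), d.choose k * f k := by
  rw [← Finset.sum_fiberwise_of_maps_to (g := Finset.card) (t := Finset.range (d+1))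
    (fun T _ => Finset.mem_range.2 (Nat.lt_succ_of_le (by
      simpa using Finset.card_le_card (Finset.subset_univ T))))]
  refine Finset.sum_congr rfl fun k _ => ?_
  have : Finset.univ.filter (fun T : Finset (Fin d) => T.card = k)
      = Finset.powersetCard k Finset.univ := by
    ext T; simp [Finset.mem_powersetCard]
  rw [Finset.sum_congr this (fun T hT => by
    rw [(Finset.mem_powersetCard.1 hT).2]), Finset.sum_const,
    Finset.card_powersetCard, Finset.card_fin, smul_eq_mul]

end

namespace Cuboct

variable {d n : ℕ}

/-- corner of a subcube -/
def corner (A : Fin d → Fin n × Fin n) (j : Fin d → Fin 2) : Fin d → Fin n :=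
  fun i => if j i = 0 then (A i).1 else (A i).2

/-- value pattern of a subcube -/
def pat (Q : (Fin d → Fin n) → Fin n) (A : Fin d → Fin n × Fin n) :
    (Fin d → Fin 2) → Fin n := fun j => Q (corner A j)

/-- set of non-degenerate coordinates -/
def Tset (A : Fin d → Fin n × Fin n) : Finset (Fin d) :=
  Finset.univ.filter fun i => (A i).1 ≠ (A i).2

variable (Q : (Fin d → Fin n) → Fin n)

lemma corner_proj {A : Fin d → Fin n × Fin n} {T : Finset (Fin d)} (hA : Tset A = T)
    (j : Fin d → Fin 2) :
    corner A (fun i => if i ∈ T then j i else 0) = corner A j := by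
  funext i
  by_cases hi : i ∈ T
  · simp [corner, hi]
  · have : (A i).1 = (A i).2 := by
      by_contra h
      exact hi (hA ▸ (by simpa [Tset] using h))
    simp [corner, hi, this]

lemma pat_proj {A : Fin d → Fin n × Fin n} {T : Finset (Fin d)} (hA : Tset A = T)
    (j : Fin d → Fin 2) :
    pat Q A (fun i => if i ∈ T then j i else 0) = pat Q A j := by
  unfold pat; rw [corner_proj hA]

lemma pat_adj (hQ : IsLatinHypercube Q) {A : Fin d → Fin n × Fin n} {T : Finset (Fin d)}
    (hA : Tset A = T) {i : Fin d} (hi : i ∈ T) (j : Fin d → Fin 2) :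
    pat Q A (Function.update j i 0) ≠ pat Q A (Function.update j i 1) := by
  have hne : (A i).1 ≠ (A i).2 := by
    have := hA ▸ hi
    simpa [Tset] using this
  set x0 := corner A (Function.update j i 0) with hx0
  have h1 : corner A (Function.update j i 0) = Function.update x0 i (A i).1 := by
    funext l
    by_cases hl : l = i
    · subst hl; simp [corner, hx0, Function.update_self]
    · simp [corner, hx0, Function.update_of_ne hl]
  have h2 : corner A (Function.update j i 1) = Function.update x0 i (A i).2 := by
    funext l
    by_cases hl : l = i
    · subst hl; simp [corner, hx0, Function.update_self]
    · simp [corner, hx0, Function.update_of_ne hl]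
  intro h
  unfold pat at h
  rw [h1, h2] at h
  exact hne ((hQ i x0).injective h)


def classC (T : Finset (Fin d)) : Finset (Fin d → Fin n × Fin n) :=
  Finset.univ.filter fun A => Tset A = T

lemma classC_card (T : Finset (Fin d)) :
    (classC (n := n) T).card = n ^ d * (n - 1) ^ T.card := by
  have h1 : classC (n := n) T = Fintype.piFinset (fun i =>
      if i ∈ T then Finset.univ.filter (fun p : Fin n × Fin n => p.1 ≠ p.2)
      else Finset.univ.filter (fun p : Fin n × Fin n => p.1 = p.2)) := by
    ext A
    simp only [classC, Finset.mem_filter, Finset.mem_univ, true_and,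
      Fintype.mem_piFinset]
    constructor
    · intro hA i
      by_cases hi : i ∈ T
      · have : i ∈ Tset A := hA ▸ hi
        simp only [Tset, Finset.mem_filter] at this
        simp [hi, this.2]
      · have : i ∉ Tset A := hA ▸ hi
        simp only [Tset, Finset.mem_filter, Finset.mem_univ, true_and, not_not] at this
        simp [hi, this]
    · intro hA
      ext i
      simp only [Tset, Finset.mem_filter, Finset.mem_univ, true_and]
      have := hA i
      by_cases hi : i ∈ T <;> simp [hi] at this <;> simp [hi, this]
  have hne : (Finset.univ.filter (fun p : Fin n × Fin n => p.1 ≠ p.2)).card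
      = n * (n - 1) := by
    have : Finset.univ.filter (fun p : Fin n × Fin n => p.1 ≠ p.2)
        = Finset.offDiag Finset.univ := by
      ext p; simp [Finset.mem_offDiag]
    rw [this, Finset.offDiag_card, Finset.card_univ, Fintype.card_fin, Nat.mul_sub_one]
  have heq : (Finset.univ.filter (fun p : Fin n × Fin n => p.1 = p.2)).card = n := by
    have : Finset.univ.filter (fun p : Fin n × Fin n => p.1 = p.2)
        = Finset.diag Finset.univ := by
      ext p; simp [Finset.mem_diag]
    rw [this, Finset.diag_card, Finset.card_univ, Fintype.card_fin]
  rw [h1, Fintype.card_piFinset]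
  simp only [apply_ite Finset.card]
  rw [Finset.prod_ite, Finset.prod_const, Finset.prod_const, hne, heq]
  have hT : Finset.univ.filter (fun i => i ∈ T) = T := by ext i; simp
  have hTc : (Finset.univ.filter (fun i => ¬ i ∈ T)).card = d - T.card := by
    rw [Finset.filter_not, hT, Finset.card_sdiff_of_subset (Finset.subset_univ T)]
    simp
  have hle : T.card ≤ d := by simpa using Finset.card_le_card (Finset.subset_univ T)
  rw [hT, hTc, Nat.mul_pow]
  rw [show n ^ T.card * (n-1) ^ T.card * n ^ (d - T.card)
      = n ^ T.card * n ^ (d - T.card) * (n-1) ^ T.card by ring, ← pow_add,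
    Nat.add_sub_cancel' hle]


lemma fin2_eq_one_of_ne_zero {v : Fin 2} (h : v ≠ 0) : v = 1 := by
  rcases v with ⟨_ | _, hv⟩
  · exact absurd rfl h
  · rcases Nat.lt_of_succ_lt_succ hv with h'
    interval_cases ‹ℕ› <;> rfl

def F (j : Fin d → Fin 2) : Finset (Fin d) := Finset.univ.filter fun i => j i = 1

def zeroJ : Fin d → Fin 2 := fun _ => 0

lemma eq_zeroJ_of_F_empty {j : Fin d → Fin 2} (h : F j = ∅) : j = zeroJ := by
  funext i
  by_contra hi
  have h1 : j i = 1 := fin2_eq_one_of_ne_zero (by simpa [zeroJ] using hi)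
  have : i ∈ F j := by simp [F, h1]
  simp [h] at this

lemma F_nonempty_of_ne {j : Fin d → Fin 2} (h : j ≠ zeroJ) : (F j).Nonempty := by
  rcases Finset.eq_empty_or_nonempty (F j) with h' | h'
  · exact absurd (eq_zeroJ_of_F_empty h') h
  · exact h'

noncomputable def par (j : Fin d → Fin 2) : Fin d → Fin 2 :=
  if h : (F j).Nonempty then Function.update j ((F j).min' h) 0 else j

def Jset (T : Finset (Fin d)) : Finset (Fin d → Fin 2) :=
  Fintype.piFinset fun i => if i ∈ T then Finset.univ else {0}

lemma mem_Jset {T : Finset (Fin d)} {j : Fin d → Fin 2} :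
    j ∈ Jset T ↔ ∀ i, i ∉ T → j i = 0 := by
  simp only [Jset, Fintype.mem_piFinset]
  constructor
  · intro h i hi; have := h i; simpa [hi] using this
  · intro h i; by_cases hi : i ∈ T <;> simp [hi, h]

lemma zeroJ_mem_Jset {T : Finset (Fin d)} : zeroJ ∈ Jset T :=
  mem_Jset.2 fun _ _ => rfl

lemma card_Jset (T : Finset (Fin d)) : (Jset T).card = 2 ^ T.card := by
  rw [Jset, Fintype.card_piFinset]
  simp only [apply_ite Finset.card, Finset.card_univ, Fintype.card_fin,
    Finset.card_singleton]
  rw [Finset.prod_ite, Finset.prod_const, Finset.prod_const]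
  have hT : Finset.univ.filter (fun i => i ∈ T) = T := by ext i; simp
  rw [hT, one_pow, mul_one]

section Par
variable {T : Finset (Fin d)} {j : Fin d → Fin 2}

lemma par_spec (hj : j ∈ Jset T) (hz : j ≠ zeroJ) :
    ∃ i ∈ T, j i = 1 ∧ par j = Function.update j i 0 ∧ j = Function.update j i 1 ∧
      F (par j) = (F j).erase i := by
  have hne := F_nonempty_of_ne hz
  set i := (F j).min' hne with hidef
  have hiF : i ∈ F j := (F j).min'_mem hne
  have hj1 : j i = 1 := by simpa [F] using hiF
  have hiT : i ∈ T := by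
    by_contra hiT
    have := mem_Jset.1 hj i hiT
    rw [this] at hj1; exact absurd hj1 (by decide)
  refine ⟨i, hiT, hj1, ?_, ?_, ?_⟩
  · rw [par, dif_pos hne]
  · funext l
    by_cases hl : l = i
    · subst hl; rw [Function.update_self, hj1]
    · rw [Function.update_of_ne hl]
  · have hpar : par j = Function.update j i 0 := by rw [par, dif_pos hne]
    rw [hpar]
    ext l
    by_cases hl : l = i
    · subst hl
      simp [F, Function.update_self]
    · simp [F, Function.update_of_ne hl, hl]

lemma par_mem_Jset (hj : j ∈ Jset T) (hz : j ≠ zeroJ) : par j ∈ Jset T := by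
  obtain ⟨i, hiT, _, hpar, _, _⟩ := par_spec hj hz
  rw [hpar]
  refine mem_Jset.2 fun l hl => ?_
  by_cases hli : l = i
  · subst hli; exact absurd hiT hl
  · rw [Function.update_of_ne hli]; exact mem_Jset.1 hj l hl

lemma card_F_par (hj : j ∈ Jset T) (hz : j ≠ zeroJ) : (F (par j)).card + 1 = (F j).card := by
  obtain ⟨i, _, hj1, _, _, hFe⟩ := par_spec hj hz
  have hiF : i ∈ F j := by simp [F, hj1]
  rw [hFe, Finset.card_erase_of_mem hiF]
  have : 1 ≤ (F j).card := Finset.card_pos.2 ⟨i, hiF⟩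
  omega

end Par

/-- encode a value distinct from `b` into `[0, n-1)` -/
def encNe (a b : Fin n) : ℕ := if a.val < b.val then a.val else a.val - 1

lemma encNe_lt {a b : Fin n} (h : a ≠ b) : encNe a b < n - 1 := by
  have hab : a.val ≠ b.val := fun hc => h (Fin.ext hc)
  have ha := a.isLt; have hb := b.isLt
  rw [encNe]; split_ifs <;> omega

lemma encNe_inj {a a' b : Fin n} (h : a ≠ b) (h' : a' ≠ b)
    (he : encNe a b = encNe a' b) : a = a' := by
  have hab : a.val ≠ b.val := fun hc => h (Fin.ext hc)
  have hab' : a'.val ≠ b.val := fun hc => h' (Fin.ext hc)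
  rw [encNe, encNe] at he
  apply Fin.ext
  split_ifs at he <;> omega


variable {d n : ℕ} (Q : (Fin d → Fin n) → Fin n)

lemma pat_ne_par (hQ : IsLatinHypercube Q) {A : Fin d → Fin n × Fin n}
    {T : Finset (Fin d)} (hA : Tset A = T) {j : Fin d → Fin 2}
    (hj : j ∈ Jset T) (hz : j ≠ zeroJ) :
    pat Q A j ≠ pat Q A (par j) := by
  obtain ⟨i, hiT, hj1, hpar, hjup, -⟩ := par_spec hj hz
  rw [hpar]
  conv_lhs => rw [hjup]
  exact (pat_adj Q hQ hA hiT j).symm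

lemma support_card_le (hQ : IsLatinHypercube Q) (T : Finset (Fin d)) :
    ((classC (n := n) T).image (pat Q)).card ≤ n * (n - 1) ^ (2 ^ T.card - 1) := by
  classical
  set J0 : Finset (Fin d → Fin 2) := (Jset T).erase zeroJ with hJ0
  set Φ : ((Fin d → Fin 2) → Fin n) → Fin n × ((Fin d → Fin 2) → ℕ) :=
    fun v => (v zeroJ, fun j => if j ∈ J0 then encNe (v j) (v (par j)) else 0) with hΦdef
  have hmem : ∀ v ∈ (classC (n := n) T).image (pat Q),
      ∃ A, Tset A = T ∧ pat Q A = v := by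
    intro v hv
    obtain ⟨A, hA, rfl⟩ := Finset.mem_image.1 hv
    exact ⟨A, (Finset.mem_filter.1 hA).2, rfl⟩
  have hadj : ∀ v ∈ (classC (n := n) T).image (pat Q), ∀ j ∈ J0,
      v j ≠ v (par j) := by
    intro v hv j hj
    obtain ⟨A, hA, rfl⟩ := hmem v hv
    obtain ⟨hz, hjJ⟩ := Finset.mem_erase.1 hj
    exact pat_ne_par Q hQ hA hjJ hz
  have hcard : ((Finset.univ : Finset (Fin n)) ×ˢ Fintype.piFinset (fun j : Fin d → Fin 2 =>
      if j ∈ J0 then Finset.range (n - 1) else ({0} : Finset ℕ))).card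
      = n * (n - 1) ^ (2 ^ T.card - 1) := by
    rw [Finset.card_product, Finset.card_univ, Fintype.card_fin,
      Fintype.card_piFinset]
    simp only [apply_ite Finset.card, Finset.card_range, Finset.card_singleton]
    rw [Finset.prod_ite, Finset.prod_const, Finset.prod_const, one_pow, mul_one]
    have h1 : Finset.univ.filter (fun j => j ∈ J0) = J0 := by ext j; simp
    rw [h1, hJ0, Finset.card_erase_of_mem zeroJ_mem_Jset, card_Jset]
  rw [← hcard]
  refine Finset.card_le_card_of_injOn Φ ?_ ?_
  · intro v hv
    rw [Finset.mem_coe, Finset.mem_product]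
    refine ⟨Finset.mem_univ _, Fintype.mem_piFinset.2 fun j => ?_⟩
    by_cases hj : j ∈ J0
    · simp only [hΦdef, if_pos hj]
      exact Finset.mem_range.2 (encNe_lt (hadj v hv j hj))
    · simp [hΦdef, hj]
  · intro v hv v' hv' hΦ
    obtain ⟨A, hA, hvA⟩ := hmem v hv
    obtain ⟨A', hA', hvA'⟩ := hmem v' hv'
    have h1 : v zeroJ = v' zeroJ := congrArg Prod.fst hΦ
    have h2 : ∀ j, j ∈ J0 →
        encNe (v j) (v (par j)) = encNe (v' j) (v' (par j)) := by
      intro j hj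
      have := congrFun (congrArg Prod.snd hΦ) j
      simpa only [hΦdef, if_pos hj] using this
    have key : ∀ m, ∀ j, j ∈ Jset T → (F j).card ≤ m → v j = v' j := by
      intro m
      induction m with
      | zero =>
        intro j hj hc
        have hF : F j = ∅ := Finset.card_eq_zero.1 (Nat.le_zero.1 hc)
        rw [eq_zeroJ_of_F_empty hF]
        exact h1
      | succ m ih =>
        intro j hj hc
        by_cases hz : j = zeroJ
        · rw [hz]; exact h1
        have hj0 : j ∈ J0 := Finset.mem_erase.2 ⟨hz, hj⟩
        have hparJ : par j ∈ Jset T := par_mem_Jset hj hz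
        have hcard := card_F_par hj hz
        have hvp : v (par j) = v' (par j) := ih (par j) hparJ (by omega)
        have hne1 : v j ≠ v (par j) := hadj v hv j hj0
        have hne2 : v' j ≠ v' (par j) := hadj v' hv' j hj0
        have he := h2 j hj0
        rw [hvp] at hne1 he
        exact encNe_inj hne1 hne2 he
    funext j
    set jp : Fin d → Fin 2 := fun i => if i ∈ T then j i else 0 with hjp
    have hjpJ : jp ∈ Jset T := mem_Jset.2 fun i hi => by simp [hjp, hi]
    have e1 : v jp = v j := by rw [← hvA]; exact pat_proj Q hA j
    have e1' : v' jp = v' j := by rw [← hvA']; exact pat_proj Q hA' j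
    rw [← e1, ← e1']
    exact key (F jp).card jp hjpJ le_rfl


/-- r_k -/
def rk (d n k : ℕ) : ℕ := n ^ (d - 1) / (n - 1) ^ (2 ^ k - k - 1)

/-- per-class lower bound -/
def bfun (d n k : ℕ) : ℕ :=
  if k ≤ 1 then n ^ (2 * d - 1) * (n - 1) ^ k
  else n ^ d * (n - 1) ^ k + n * (n - d) ^ (2 ^ k - 1) * (rk d n k * (rk d n k - 1))

lemma numeric_perT (hd : 3 ≤ d) (hn : d < n) {k : ℕ} (hkd : k ≤ d) {S : ℕ}
    (hS1 : n ^ d * (n - 1) ^ k ≤ S)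
    (hS2 : (n ^ d * (n - 1) ^ k) ^ 2 ≤ n * (n - 1) ^ (2 ^ k - 1) * S) :
    bfun d n k ≤ S := by
  have hn1 : 1 ≤ n - 1 := by omega
  have hP0 : 0 < n * (n - 1) ^ (2 ^ k - 1) :=
    Nat.mul_pos (by omega) (Nat.pow_pos (by omega))
  by_cases hk1 : k ≤ 1
  · -- here M^2 = P * b exactly
    rw [bfun, if_pos hk1]
    refine Nat.le_of_mul_le_mul_left ?_ hP0
    refine le_trans (le_of_eq ?_) hS2
    have hnn : n * n ^ (2 * d - 1) = n ^ d * n ^ d := by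
      rw [← pow_succ', ← pow_add]
      congr 1
      omega
    interval_cases k
    · simp only [pow_zero, mul_one, sq]
      norm_num
      rw [hnn]
    · simp only [pow_one, sq]
      norm_num
      calc n * (n - 1) * (n ^ (2 * d - 1) * (n - 1))
          = (n * n ^ (2 * d - 1)) * ((n - 1) * (n - 1)) := by ring
        _ = n ^ d * (n - 1) * (n ^ d * (n - 1)) := by rw [hnn]; ring
  · rw [bfun, if_neg hk1]
    push_neg at hk1
    have hk2 : 2 ≤ k := hk1
    set r := rk d n k with hr
    rcases Nat.eq_zero_or_pos r with hr0 | hr1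
    · rw [hr0]; simpa using hS1
    set M := n ^ d * (n - 1) ^ k with hM
    set P := n * (n - 1) ^ (2 ^ k - 1) with hP
    set E := n * (n - d) ^ (2 ^ k - 1) with hE
    have hk2p : k + 1 ≤ 2 ^ k := Nat.lt_two_pow_self (n := k)
    have hPr : P * r ≤ M := by
      have h1 : r * (n - 1) ^ (2 ^ k - k - 1) ≤ n ^ (d - 1) := by
        rw [hr, rk]; exact Nat.div_mul_le_self _ _
      have h2 : (n - 1) ^ (2 ^ k - k - 1) * (n - 1) ^ k = (n - 1) ^ (2 ^ k - 1) := by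
        rw [← pow_add]; congr 1; omega
      have h3 : n ^ (d - 1) * n = n ^ d := by
        rw [← pow_succ]; congr 1; omega
      calc P * r = (r * (n - 1) ^ (2 ^ k - k - 1)) * ((n - 1) ^ k * n) := by
            rw [hP, ← h2]; ring
        _ ≤ n ^ (d - 1) * ((n - 1) ^ k * n) := Nat.mul_le_mul_right _ h1
        _ = M := by rw [hM, ← h3]; ring
    have hEP : E ≤ P := by
      rw [hE, hP]
      exact Nat.mul_le_mul_left _ (Nat.pow_le_pow_left (by omega) _)
    refine Nat.le_of_mul_le_mul_left ?_ hP0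
    have key : P * (M + E * (r * (r - 1))) ≤ M * M := by
      have h5 : P * (E * (r * (r - 1))) ≤ (P * (r - 1)) * (P * r) := by
        calc P * (E * (r * (r - 1))) = (P * (r - 1)) * (E * r) := by ring
          _ ≤ (P * (r - 1)) * (P * r) :=
            Nat.mul_le_mul_left _ (Nat.mul_le_mul_right _ hEP)
      have h6 : (P * (r - 1)) * (P * r) ≤ (P * (r - 1)) * M := Nat.mul_le_mul_left _ hPr
      have h7 : P * M + P * (r - 1) * M = (P * r) * M := by
        have hr' : 1 + (r - 1) = r := by omega
        calc P * M + P * (r - 1) * M = (P * M) * (1 + (r - 1)) := by ring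
          _ = (P * r) * M := by rw [hr']; ring
      calc P * (M + E * (r * (r - 1))) = P * M + P * (E * (r * (r - 1))) := by ring
        _ ≤ P * M + P * (r - 1) * M := by
            have := h5.trans h6; omega
        _ = (P * r) * M := h7
        _ ≤ M * M := Nat.mul_le_mul_right _ hPr
    calc P * (M + E * (r * (r - 1))) ≤ M * M := key
      _ = M ^ 2 := (sq M).symm
      _ ≤ P * S := hS2


lemma perT_bound (hd : 3 ≤ d) (hn : d < n) (hQ : IsLatinHypercube Q) (T : Finset (Fin d)) :
    bfun d n T.card ≤ ∑ v : (Fin d → Fin 2) → Fin n,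
      ((classC (n := n) T).filter fun A => pat Q A = v).card ^ 2 := by
  classical
  set s := (classC (n := n) T).image (pat Q) with hs
  set N : ((Fin d → Fin 2) → Fin n) → ℕ :=
    fun v => ((classC (n := n) T).filter fun A => pat Q A = v).card with hN
  have hM : ∑ v ∈ s, N v = (classC (n := n) T).card :=
    (Finset.card_eq_sum_card_fiberwise fun A hA => Finset.mem_image_of_mem _ hA).symm
  have hsub : ∑ v ∈ s, N v ^ 2 ≤ ∑ v : (Fin d → Fin 2) → Fin n, N v ^ 2 :=
    Finset.sum_le_sum_of_subset (Finset.subset_univ s)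
  have hS1 : (classC (n := n) T).card ≤ ∑ v : (Fin d → Fin 2) → Fin n, N v ^ 2 := by
    rw [← hM]
    refine le_trans (Finset.sum_le_sum fun v _ => ?_) hsub
    exact Nat.le_self_pow two_ne_zero _
  have hCS : ((classC (n := n) T).card) ^ 2
      ≤ n * (n - 1) ^ (2 ^ T.card - 1) * ∑ v : (Fin d → Fin 2) → Fin n, N v ^ 2 := by
    rw [← hM]
    calc (∑ v ∈ s, N v) ^ 2 ≤ s.card * ∑ v ∈ s, N v ^ 2 := sq_sum_le_card_mul_sum_sq
      _ ≤ (n * (n - 1) ^ (2 ^ T.card - 1)) * ∑ v : (Fin d → Fin 2) → Fin n, N v ^ 2 :=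
          Nat.mul_le_mul (support_card_le Q hQ T) hsub
  have hkd : T.card ≤ d := by simpa using Finset.card_le_card (Finset.subset_univ T)
  refine numeric_perT hd hn hkd ?_ ?_
  · rw [← classC_card]; exact hS1
  · rw [← classC_card]; exact hCS

lemma count_ge (hd : 3 ≤ d) (hn : d < n) (hQ : IsLatinHypercube Q) :
    ∑ k ∈ Finset.range (d + 1), d.choose k * bfun d n k ≤ cuboctCount Q := by
  classical
  have hset : {p : (Fin d → Fin n × Fin n) × (Fin d → Fin n × Fin n) |
      IsCuboct Q p.1 p.2}
      = ↑(Finset.univ.filter fun p : (Fin d → Fin n × Fin n) × (Fin d → Fin n × Fin n) =>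
          pat Q p.1 = pat Q p.2) := by
    ext ⟨A, B⟩
    simp only [Set.mem_setOf_eq, Finset.coe_filter, Finset.mem_univ, true_and, IsCuboct,
      pat, funext_iff]
    exact Iff.rfl
  have hcc : cuboctCount Q
      = ∑ v : (Fin d → Fin 2) → Fin n,
          (Finset.univ.filter fun A => pat Q A = v).card ^ 2 := by
    rw [cuboctCount, hset, Set.ncard_coe_finset, card_pairs_eq_sum_sq]
  rw [hcc]
  have hdecomp : ∀ v : (Fin d → Fin 2) → Fin n,
      (Finset.univ.filter fun A => pat Q A = v).card
        = ∑ T : Finset (Fin d), ((classC (n := n) T).filter fun A => pat Q A = v).card := by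
    intro v
    rw [Finset.card_eq_sum_card_fiberwise
      (f := Tset) (t := Finset.univ) (fun A _ => Finset.mem_univ _)]
    refine Finset.sum_congr rfl fun T _ => ?_
    congr 1
    ext A
    simp only [Finset.mem_filter, Finset.mem_univ, true_and, classC]
    tauto
  calc ∑ k ∈ Finset.range (d + 1), d.choose k * bfun d n k
      = ∑ T : Finset (Fin d), bfun d n T.card := (sum_card_powerset_eq _).symm
    _ ≤ ∑ T : Finset (Fin d), ∑ v : (Fin d → Fin 2) → Fin n,
          ((classC (n := n) T).filter fun A => pat Q A = v).card ^ 2 :=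
        Finset.sum_le_sum fun T _ => perT_bound Q hd hn hQ T
    _ = ∑ v : (Fin d → Fin 2) → Fin n, ∑ T : Finset (Fin d),
          ((classC (n := n) T).filter fun A => pat Q A = v).card ^ 2 := Finset.sum_comm
    _ ≤ ∑ v : (Fin d → Fin 2) → Fin n,
          (Finset.univ.filter fun A => pat Q A = v).card ^ 2 := by
        refine Finset.sum_le_sum fun v _ => ?_
        rw [hdecomp v]
        exact sum_sq_le_sq_sum_nat _

lemma final_arith (hd : 3 ≤ d) (hn : d < n) :
    ((d : ℤ) + 1) * (n : ℤ) ^ (2 * d) -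
        ((d : ℤ) - 1) * ((n : ℤ) ^ (2 * d - 1) + (n : ℤ) ^ d) -
        (d : ℤ) * (n : ℤ) ^ (d + 1) +
        (n : ℤ) * ∑ k ∈ Finset.Icc 2 d,
          (d.choose k : ℤ) * ((n : ℤ) - (d : ℤ)) ^ (2 ^ k - 1) *
            ((n ^ (d - 1) / (n - 1) ^ (2 ^ k - k - 1) : ℕ) : ℤ) *
            (((n ^ (d - 1) / (n - 1) ^ (2 ^ k - k - 1) : ℕ) : ℤ) - 1) ≤
      ((∑ k ∈ Finset.range (d + 1), d.choose k * bfun d n k : ℕ) : ℤ) := by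
  have hn1 : (1 : ℕ) ≤ n := by omega
  have hins : Finset.range (d + 1) = insert 0 (insert 1 (Finset.Icc 2 d)) := by
    ext x
    simp only [Finset.mem_range, Finset.mem_insert, Finset.mem_Icc]
    omega
  have h0 : (0 : ℕ) ∉ insert 1 (Finset.Icc 2 d) := by simp
  have h1 : (1 : ℕ) ∉ Finset.Icc 2 d := by simp
  have hsplitN : ∑ k ∈ Finset.range (d + 1), d.choose k * bfun d n k
      = bfun d n 0 + d * bfun d n 1 + ∑ k ∈ Finset.Icc 2 d, d.choose k * bfun d n k := by
    rw [hins, Finset.sum_insert h0, Finset.sum_insert h1, Nat.choose_zero_right,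
      Nat.choose_one_right, one_mul]
    ring
  have hb0 : bfun d n 0 = n ^ (2 * d - 1) := by simp [bfun]
  have hb1 : bfun d n 1 = n ^ (2 * d - 1) * (n - 1) := by simp [bfun]
  have hbcast : ∀ k, 2 ≤ k → ((bfun d n k : ℕ) : ℤ)
      = (n : ℤ) ^ d * ((n : ℤ) - 1) ^ k + (n : ℤ) * ((n : ℤ) - (d : ℤ)) ^ (2 ^ k - 1) *
          (((n ^ (d - 1) / (n - 1) ^ (2 ^ k - k - 1) : ℕ) : ℤ) *
            (((n ^ (d - 1) / (n - 1) ^ (2 ^ k - k - 1) : ℕ) : ℤ) - 1)) := by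
    intro k hk
    rw [bfun, if_neg (by omega), rk]
    rcases Nat.eq_zero_or_pos (n ^ (d - 1) / (n - 1) ^ (2 ^ k - k - 1)) with h0' | h1'
    · rw [h0']
      push_cast [Nat.cast_sub hn1, Nat.cast_sub hn.le]
      ring
    · push_cast [Nat.cast_sub hn1, Nat.cast_sub hn.le, Nat.cast_sub h1']
      ring
  have hIcc : ((∑ k ∈ Finset.Icc 2 d, d.choose k * bfun d n k : ℕ) : ℤ)
      = (∑ k ∈ Finset.Icc 2 d, (d.choose k : ℤ) * ((n : ℤ) ^ d * ((n : ℤ) - 1) ^ k))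
        + ∑ k ∈ Finset.Icc 2 d, (d.choose k : ℤ) * (n : ℤ) *
            ((n : ℤ) - (d : ℤ)) ^ (2 ^ k - 1) *
            (((n ^ (d - 1) / (n - 1) ^ (2 ^ k - k - 1) : ℕ) : ℤ) *
              (((n ^ (d - 1) / (n - 1) ^ (2 ^ k - k - 1) : ℕ) : ℤ) - 1)) := by
    rw [Nat.cast_sum, ← Finset.sum_add_distrib]
    refine Finset.sum_congr rfl fun k hk => ?_
    have hk2 : 2 ≤ k := (Finset.mem_Icc.1 hk).1
    rw [Nat.cast_mul, hbcast k hk2]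
    ring
  have hbin : ∑ k ∈ Finset.range (d + 1), ((n : ℤ) - 1) ^ k * (d.choose k : ℤ)
      = (n : ℤ) ^ d := by
    have h := add_pow ((n : ℤ) - 1) 1 d
    simp only [one_pow, mul_one] at h
    have h2 : (n : ℤ) - 1 + 1 = (n : ℤ) := by ring
    rw [h2] at h
    exact h.symm
  have hbin2 : ∑ k ∈ Finset.Icc 2 d, ((n : ℤ) - 1) ^ k * (d.choose k : ℤ)
      = (n : ℤ) ^ d - 1 - (d : ℤ) * ((n : ℤ) - 1) := by
    rw [hins, Finset.sum_insert h0, Finset.sum_insert h1, Nat.choose_zero_right,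
      Nat.choose_one_right, pow_zero, pow_one] at hbin
    push_cast at hbin
    linarith [hbin]
  have hIccMain : ∑ k ∈ Finset.Icc 2 d, (d.choose k : ℤ) * ((n : ℤ) ^ d * ((n : ℤ) - 1) ^ k)
      = (n : ℤ) ^ d * ((n : ℤ) ^ d - 1 - (d : ℤ) * ((n : ℤ) - 1)) := by
    rw [← hbin2, Finset.mul_sum]
    exact Finset.sum_congr rfl fun k _ => by ring
  have hRHS : ((∑ k ∈ Finset.range (d + 1), d.choose k * bfun d n k : ℕ) : ℤ)
      = (n : ℤ) ^ (2 * d - 1) + (d : ℤ) * ((n : ℤ) ^ (2 * d - 1) * ((n : ℤ) - 1))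
        + (n : ℤ) ^ d * ((n : ℤ) ^ d - 1 - (d : ℤ) * ((n : ℤ) - 1))
        + ∑ k ∈ Finset.Icc 2 d, (d.choose k : ℤ) * (n : ℤ) *
            ((n : ℤ) - (d : ℤ)) ^ (2 ^ k - 1) *
            (((n ^ (d - 1) / (n - 1) ^ (2 ^ k - k - 1) : ℕ) : ℤ) *
              (((n ^ (d - 1) / (n - 1) ^ (2 ^ k - k - 1) : ℕ) : ℤ) - 1)) := by
    rw [hsplitN, Nat.cast_add, Nat.cast_add, hIcc, hIccMain, hb0, hb1]
    push_cast [Nat.cast_sub hn1]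
    ring
  have hLHSsum : (n : ℤ) * ∑ k ∈ Finset.Icc 2 d,
        (d.choose k : ℤ) * ((n : ℤ) - (d : ℤ)) ^ (2 ^ k - 1) *
          ((n ^ (d - 1) / (n - 1) ^ (2 ^ k - k - 1) : ℕ) : ℤ) *
          (((n ^ (d - 1) / (n - 1) ^ (2 ^ k - k - 1) : ℕ) : ℤ) - 1)
      = ∑ k ∈ Finset.Icc 2 d, (d.choose k : ℤ) * (n : ℤ) *
          ((n : ℤ) - (d : ℤ)) ^ (2 ^ k - 1) *
          (((n ^ (d - 1) / (n - 1) ^ (2 ^ k - k - 1) : ℕ) : ℤ) *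
            (((n ^ (d - 1) / (n - 1) ^ (2 ^ k - k - 1) : ℕ) : ℤ) - 1)) := by
    rw [Finset.mul_sum]
    exact Finset.sum_congr rfl fun k _ => by ring
  rw [hRHS, hLHSsum]
  have hX : (n : ℤ) ^ (2 * d) = (n : ℤ) ^ (2 * d - 1) * (n : ℤ) := by
    rw [← pow_succ]
    congr 1
    omega
  have hY : (n : ℤ) ^ (d + 1) = (n : ℤ) ^ d * (n : ℤ) := pow_succ _ _
  have hXY : (n : ℤ) ^ d * (n : ℤ) ^ d = (n : ℤ) ^ (2 * d - 1) * (n : ℤ) := by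
    rw [← pow_add, ← hX]
    congr 1
    omega
  have hD1 : (1 : ℤ) ≤ (d : ℤ) := by exact_mod_cast Nat.one_le_of_lt hd
  have hY0 : (0 : ℤ) ≤ (n : ℤ) ^ d := by positivity
  have hkey : (0 : ℤ) ≤ ((d : ℤ) - 1) * (n : ℤ) ^ d := by
    apply mul_nonneg (by linarith) hY0
  rw [hX, hY]
  linarith [hXY, hkey]


end Cuboct

/-- For `d ≥ 3` and `n > d`, every `d`-dimensional latin hypercube of order `n`
contains at least
`(d+1)·n^(2d) − (d−1)·(n^(2d−1) + n^d) − d·n^(d+1)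
  + n·Σ_{k=2}^{d} (d choose k)·(n−d)^(2^k−1)·r_k·(r_k−1)`
cuboctahedra, where `r_k = ⌊n ^ (d−1) / (n−1) ^ (2^k − k − 1)⌋`. -/
theorem cuboctCount_lower_bound {d n : ℕ} (hd : 3 ≤ d) (hn : d < n)
    (Q : (Fin d → Fin n) → Fin n) (hQ : IsLatinHypercube Q) :
    ((d : ℤ) + 1) * (n : ℤ) ^ (2 * d) -
        ((d : ℤ) - 1) * ((n : ℤ) ^ (2 * d - 1) + (n : ℤ) ^ d) -
        (d : ℤ) * (n : ℤ) ^ (d + 1) +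
        (n : ℤ) * ∑ k ∈ Finset.Icc 2 d,
          (d.choose k : ℤ) * ((n : ℤ) - (d : ℤ)) ^ (2 ^ k - 1) *
            ((n ^ (d - 1) / (n - 1) ^ (2 ^ k - k - 1) : ℕ) : ℤ) *
            (((n ^ (d - 1) / (n - 1) ^ (2 ^ k - k - 1) : ℕ) : ℤ) - 1) ≤
      (cuboctCount Q : ℤ) := by
  refine le_trans (Cuboct.final_arith hd hn) ?_
  exact_mod_cast Cuboct.count_ge Q hd hn hQ
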